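/- Let W be a non-degenerate quasi-homogeneous polynomial in N complex variables with weights q_i < 1 for each i. Then there is a constant C depending only on W such that for every (u_1,...,u_N) in C^N and every i, |u_i| ≤ C(Σ_j |∂W/∂x_j(u)| + 1)^{δ_i}, where δ_i = q_i / min_j(1 - q_j). Moreover if q_i ≤ 1/2 for all i then δ_i ≤ 1 for all i, and if q_i < 1/2 for all i then δ_i < 1 for all i. -/

import Mathlib

open MvPolynomial

private lemma pderiv_rescale {N : ℕ} (c : Fin N → ℂ) (i : Fin N) (p : MvPolynomial (Fin N) ℂ) :
    pderiv i (bind₁ (fun j => C (c j) * X j) p) =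
      C (c i) * bind₁ (fun j => C (c j) * X j) (pderiv i p) := by
  induction p using MvPolynomial.induction_on with
  | C a => simp
  | add p r hp hr => simp only [map_add, hp, hr, mul_add]
  | mul_X p n hp =>
    by_cases h : n = i
    · subst h
      simp only [map_mul, bind₁_X_right, pderiv_mul, hp, pderiv_X_self, map_add, mul_one, pderiv_C, zero_mul, zero_add]
      ring
    · simp only [map_mul, bind₁_X_right, pderiv_mul, hp, pderiv_X_of_ne h, mul_zero, add_zero,
        map_zero, map_add, pderiv_C, zero_mul]
      ring

private lemma eval_bind_scale {N : ℕ} (c : Fin N → ℂ) (p : MvPolynomial (Fin N) ℂ)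
    (y : Fin N → ℂ) :
    eval y (bind₁ (fun j => C (c j) * X j) p) = eval (fun j => c j * y j) p := by
  induction p using MvPolynomial.induction_on with
  | C a => simp
  | add p r hp hr => simp [hp, hr]
  | mul_X p n hp => simp [hp]

private lemma eval_pderiv_scale {N : ℕ} (W : MvPolynomial (Fin N) ℂ) (q : Fin N → ℝ)
    (hquasi : ∀ (lam : ℂ) (x : Fin N → ℂ),
      eval (fun i => lam ^ (q i : ℂ) * x i) W = lam * eval x W)
    (lam : ℂ) (x : Fin N → ℂ) (i : Fin N) :
    lam ^ (q i : ℂ) * eval (fun j => lam ^ (q j : ℂ) * x j) (pderiv i W)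
      = lam * eval x (pderiv i W) := by
  have hpoly : bind₁ (fun j => C (lam ^ (q j : ℂ)) * X j) W = C lam * W :=
    MvPolynomial.funext fun y => by
      rw [eval_bind_scale, hquasi, eval_mul, eval_C]
  have h1 := congrArg (pderiv i) hpoly
  rw [pderiv_rescale, pderiv_mul, pderiv_C, zero_mul, zero_add] at h1
  have h2 := congrArg (eval x) h1
  rw [eval_mul, eval_C, eval_bind_scale, eval_mul, eval_C] at h2
  exact h2

private theorem witten_aux {N : ℕ} (hN : 0 < N)
    (W : MvPolynomial (Fin N) ℂ) (q : Fin N → ℝ)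
    (hq : ∀ i, 0 < q i ∧ q i < 1)
    (hquasi : ∀ (lam : ℂ) (x : Fin N → ℂ),
      eval (fun i => lam ^ (q i : ℂ) * x i) W = lam * eval x W)
    (hnondeg : ∀ x : Fin N → ℂ, (∀ i, eval x (pderiv i W) = 0) → x = 0) :
    (∃ C : ℝ, 0 < C ∧ ∀ (u : Fin N → ℂ) (i : Fin N),
        ‖u i‖ ≤ C * (∑ j, ‖eval u (pderiv j W)‖ + 1) ^ ((q i) / sInf (Set.range fun j => 1 - q j))) ∧
    ((∀ i, q i ≤ 1 / 2) → ∀ i, (q i) / sInf (Set.range fun j => 1 - q j) ≤ 1) ∧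
    ((∀ i, q i < 1 / 2) → ∀ i, (q i) / sInf (Set.range fun j => 1 - q j) < 1) := by
  haveI : Nonempty (Fin N) := ⟨⟨0, hN⟩⟩
  set m := sInf (Set.range fun j => 1 - q j) with hmdef
  obtain ⟨j0, hj0⟩ : ∃ j, 1 - q j = m := by
    have h := Set.Nonempty.csInf_mem (Set.range_nonempty fun j => 1 - q j)
      (Set.finite_range _)
    exact h
  have hmpos : 0 < m := by rw [← hj0]; linarith [(hq j0).2]
  have hmle : ∀ j, m ≤ 1 - q j := fun j =>
    csInf_le (Set.Finite.bddBelow (Set.finite_range _)) ⟨j, rfl⟩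
  refine ⟨?_, ?_, ?_⟩
  · -- main estimate
    set F : (Fin N → ℂ) → ℝ := fun x => ∑ j, ‖eval x (pderiv j W)‖ with hF
    have hFcont : Continuous F := continuous_finset_sum _ fun j _ =>
      (MvPolynomial.continuous_eval _).norm
    have hScpt : IsCompact (Metric.sphere (0 : Fin N → ℂ) 1) := isCompact_sphere 0 1
    have hSne : (Metric.sphere (0 : Fin N → ℂ) 1).Nonempty := by
      refine ⟨fun _ => 1, ?_⟩
      rw [Metric.mem_sphere, dist_zero_right, pi_norm_const]
      exact norm_one
    obtain ⟨z, hzS, hzmin⟩ := hScpt.exists_isMinOn hSne hFcont.continuousOn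
    set ε := F z with hεdef
    have hεpos : 0 < ε := by
      rcases lt_or_eq_of_le (Finset.sum_nonneg fun j _ => norm_nonneg
        (eval z (pderiv j W))) with h | h
      · exact h
      · exfalso
        have hz0 : z = 0 := hnondeg z fun j => by
          have := (Finset.sum_eq_zero_iff_of_nonneg
            (fun j _ => norm_nonneg (eval z (pderiv j W)))).mp h.symm j (Finset.mem_univ j)
          simpa using this
        have : ‖z‖ = 1 := by rwa [Metric.mem_sphere, dist_zero_right] at hzS
        rw [hz0, norm_zero] at this
        norm_num at this
    set B := max 1 ε⁻¹ with hBdef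
    have hB1 : (1:ℝ) ≤ B := le_max_left _ _
    have hC1 : (1:ℝ) ≤ B ^ m⁻¹ := by
      rw [← Real.rpow_zero B]
      exact Real.rpow_le_rpow_of_exponent_le hB1 (inv_nonneg.mpr (le_of_lt hmpos))
    refine ⟨B ^ m⁻¹, ?_, ?_⟩
    · exact lt_of_lt_of_le one_pos hC1
    intro u i
    set Su := ∑ j, ‖eval u (pderiv j W)‖ with hSu
    have hSu0 : 0 ≤ Su := Finset.sum_nonneg fun j _ => norm_nonneg _
    have hpow1 : (1:ℝ) ≤ (Su + 1) ^ (q i / m) := by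
      nth_rewrite 1 [← Real.rpow_zero (Su + 1)]
      exact Real.rpow_le_rpow_of_exponent_le (by linarith) (div_nonneg (le_of_lt (hq i).1) (le_of_lt hmpos))
    set r := Finset.univ.sup' Finset.univ_nonempty (fun j => ‖u j‖ ^ (q j)⁻¹) with hrdef
    have hub : ∀ j, ‖u j‖ ^ (q j)⁻¹ ≤ r := fun j => by
      rw [hrdef]; exact Finset.le_sup' (fun j => ‖u j‖ ^ (q j)⁻¹) (Finset.mem_univ j)
    have hr0 : 0 ≤ r := le_trans (Real.rpow_nonneg (norm_nonneg (u i)) (q i)⁻¹) (hub i)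
    have hru : ∀ j, ‖u j‖ ≤ r ^ (q j) := fun j => by
      have h := Real.rpow_le_rpow (Real.rpow_nonneg (norm_nonneg (u j)) _) (hub j)
        (le_of_lt (hq j).1)
      rwa [Real.rpow_inv_rpow (norm_nonneg _) (ne_of_gt (hq j).1)] at h
    by_cases hr1 : r ≤ 1
    · have h1 : ‖u i‖ ≤ 1 :=
        le_trans (hru i) (Real.rpow_le_one hr0 hr1 (le_of_lt (hq i).1))
      calc ‖u i‖ ≤ 1 := h1
        _ ≤ B ^ m⁻¹ * (Su + 1) ^ (q i / m) := by
            have h2 := mul_le_mul hC1 hpow1 zero_le_one (le_trans zero_le_one hC1)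
            linarith
    · push_neg at hr1
      have hrpos : 0 < r := lt_trans one_pos hr1
      have hrC : ((r:ℝ) : ℂ) ≠ 0 := by exact_mod_cast ne_of_gt hrpos
      have hcne : ∀ j, ((r:ℂ) ^ ((q j : ℝ) : ℂ)) ≠ 0 := fun j => by
        rw [Ne, Complex.cpow_eq_zero_iff]
        rintro ⟨h, -⟩
        exact hrC h
      set x : Fin N → ℂ := fun j => ((r:ℂ) ^ ((q j : ℝ) : ℂ))⁻¹ * u j with hxdef
      have hscaled : (fun j => (r:ℂ) ^ ((q j : ℝ) : ℂ) * x j) = u := by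
        funext j
        rw [hxdef]
        exact mul_inv_cancel_left₀ (hcne j) (u j)
      have hnormc : ∀ j, ‖(r:ℂ) ^ ((q j : ℝ) : ℂ)‖ = r ^ (q j) := fun j => by
        rw [Complex.norm_cpow_eq_rpow_re_of_pos hrpos,
          Complex.ofReal_re]
      have hnx : ∀ j, ‖x j‖ = ‖u j‖ / r ^ (q j) := fun j => by
        rw [hxdef, norm_mul, norm_inv, hnormc j]
        ring
      have hxle : ∀ j, ‖x j‖ ≤ 1 := fun j => by
        rw [hnx j, div_le_one (Real.rpow_pos_of_pos hrpos _)]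
        exact hru j
      obtain ⟨j1, -, hj1⟩ := Finset.exists_mem_eq_sup' (Finset.univ_nonempty)
        (fun j => ‖u j‖ ^ (q j)⁻¹)
      have huj1 : r ^ (q j1) = ‖u j1‖ := by
        rw [hrdef, hj1, Real.rpow_inv_rpow (norm_nonneg _) (ne_of_gt (hq j1).1)]
      have hxnorm : ‖x‖ = 1 := by
        refine le_antisymm ((pi_norm_le_iff_of_nonneg zero_le_one).mpr hxle) ?_
        have : ‖x j1‖ = 1 := by
          rw [hnx j1, ← huj1, div_self (ne_of_gt (Real.rpow_pos_of_pos hrpos _))]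
        rw [← this]
        exact norm_le_pi_norm x j1
      have hεF : ε ≤ F x := hzmin (by rwa [Metric.mem_sphere, dist_zero_right])
      have hterm : ∀ j, ‖eval x (pderiv j W)‖ = r ^ (q j - 1) * ‖eval u (pderiv j W)‖ := by
        intro j
        have h := eval_pderiv_scale W q hquasi (r:ℂ) x j
        rw [hscaled] at h
        have hnorm : r ^ (q j) * ‖eval u (pderiv j W)‖ = r * ‖eval x (pderiv j W)‖ := by
          have h2 := congrArg norm h
          rwa [norm_mul, norm_mul, hnormc j, Complex.norm_real,
            Real.norm_of_nonneg hr0] at h2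
        rw [Real.rpow_sub hrpos, Real.rpow_one, div_mul_eq_mul_div,
          eq_div_iff (ne_of_gt hrpos)]
        linarith
      have hFxle : F x ≤ r ^ (-m) * Su := by
        rw [hF, hSu, Finset.mul_sum]
        refine Finset.sum_le_sum fun j _ => ?_
        rw [hterm j]
        refine mul_le_mul_of_nonneg_right ?_ (norm_nonneg _)
        exact Real.rpow_le_rpow_of_exponent_le (le_of_lt hr1) (by linarith [hmle j])
      have hrm : r ^ m ≤ (Su + 1) * B := by
        have h1 : ε ≤ r ^ (-m) * Su := le_trans hεF hFxle
        have h2 : r ^ m * ε ≤ Su := by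
          have h3 := mul_le_mul_of_nonneg_left h1
            (le_of_lt (Real.rpow_pos_of_pos hrpos m))
          rwa [← mul_assoc, ← Real.rpow_add hrpos, add_neg_cancel, Real.rpow_zero,
            one_mul] at h3
        have h4 : r ^ m ≤ Su / ε := (le_div_iff₀ hεpos).mpr h2
        calc r ^ m ≤ Su / ε := h4
          _ = Su * ε⁻¹ := div_eq_mul_inv _ _
          _ ≤ (Su + 1) * B := by
              refine mul_le_mul (by linarith) (le_max_right _ _)
                (inv_nonneg.mpr (le_of_lt hεpos)) (by linarith)
      have hr_le : r ≤ ((Su + 1) * B) ^ m⁻¹ := by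
        have h5 := Real.rpow_le_rpow (Real.rpow_nonneg hr0 m) hrm
          (inv_nonneg.mpr (le_of_lt hmpos))
        rwa [Real.rpow_rpow_inv hr0 (ne_of_gt hmpos)] at h5
      have hXnn : (0:ℝ) ≤ (Su + 1) * B := mul_nonneg (by linarith) (le_trans zero_le_one hB1)
      calc ‖u i‖ ≤ r ^ (q i) := hru i
        _ ≤ (((Su + 1) * B) ^ m⁻¹) ^ (q i) :=
            Real.rpow_le_rpow hr0 hr_le (le_of_lt (hq i).1)
        _ = (Su + 1) ^ (m⁻¹ * q i) * B ^ (m⁻¹ * q i) := by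
            rw [← Real.rpow_mul hXnn, Real.mul_rpow (by linarith) (by linarith)]
        _ ≤ (Su + 1) ^ (m⁻¹ * q i) * B ^ m⁻¹ := by
            refine mul_le_mul_of_nonneg_left ?_ (Real.rpow_nonneg (by linarith) _)
            refine Real.rpow_le_rpow_of_exponent_le hB1 ?_
            calc m⁻¹ * q i ≤ m⁻¹ * 1 :=
                  mul_le_mul_of_nonneg_left (le_of_lt (hq i).2)
                    (inv_nonneg.mpr (le_of_lt hmpos))
              _ = m⁻¹ := mul_one _
        _ = B ^ m⁻¹ * (Su + 1) ^ (q i / m) := by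
            rw [div_eq_mul_inv, mul_comm (q i) m⁻¹, mul_comm]
  · intro h i
    rw [div_le_one hmpos, ← hj0]
    linarith [h i, h j0]
  · intro h i
    rw [div_lt_one hmpos, ← hj0]
    linarith [h i, h j0]

/-- The exponent `δ_i = q_i / min_j (1 - q_j)`. -/
noncomputable def deltaExp {N : ℕ} (q : Fin N → ℝ) (i : Fin N) : ℝ :=
  q i / sInf (Set.range fun j => 1 - q j)

/-- For a non-degenerate quasi-homogeneous polynomial `W` with weights
`q i < 1`, there is a constant `C > 0` such that
`‖u i‖ ≤ C (∑ j ‖∂W/∂x_j (u)‖ + 1) ^ δ_i` for all `u`, where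
`δ_i = q_i / min_j (1 - q_j)`; moreover `δ_i ≤ 1` if all `q_i ≤ 1/2` and
`δ_i < 1` if all `q_i < 1/2`. -/
theorem witten_degenerate_estimate {N : ℕ} (hN : 0 < N)
    (W : MvPolynomial (Fin N) ℂ) (q : Fin N → ℝ)
    (hq : ∀ i, 0 < q i ∧ q i < 1)
    (hquasi : ∀ (lam : ℂ) (x : Fin N → ℂ),
      eval (fun i => lam ^ (q i : ℂ) * x i) W = lam * eval x W)
    (hnondeg : ∀ x : Fin N → ℂ, (∀ i, eval x (pderiv i W) = 0) → x = 0) :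
    (∃ C : ℝ, 0 < C ∧ ∀ (u : Fin N → ℂ) (i : Fin N),
        ‖u i‖ ≤ C * (∑ j, ‖eval u (pderiv j W)‖ + 1) ^ deltaExp q i) ∧
    ((∀ i, q i ≤ 1 / 2) → ∀ i, deltaExp q i ≤ 1) ∧
    ((∀ i, q i < 1 / 2) → ∀ i, deltaExp q i < 1) := by
  simpa only [deltaExp] using witten_aux hN W q hq hquasi hnondeg
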